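/- Let f(r,θ) be defined for r ≥ R₀ and θ ∈ [0,A], twice differentiable in θ, such that ∂f/∂θ and ∂²f/∂θ² tend to zero uniformly as r → ∞. Then for every sufficiently large r, the curve θ ↦ (r cos θ, r sin θ, θ + f(r,θ)), θ ∈ [0,A], has total curvature strictly less than A. -/

import Mathlib

open Real

noncomputable section

/-- The cross product of two vectors in Euclidean 3-space. -/
def cross3 (v w : EuclideanSpace ℝ (Fin 3)) : EuclideanSpace ℝ (Fin 3) :=
  WithLp.toLp 2 ![v 1 * w 2 - v 2 * w 1, v 2 * w 0 - v 0 * w 2, v 0 * w 1 - v 1 * w 0]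

/-- The almost-helical curve `θ ↦ (r cos θ, r sin θ, θ + f(r,θ))`. -/
def helCurve (r : ℝ) (f : ℝ → ℝ → ℝ) : ℝ → EuclideanSpace ℝ (Fin 3) :=
  fun θ => WithLp.toLp 2 ![r * Real.cos θ, r * Real.sin θ, θ + f r θ]

/-- First derivative of the almost-helical curve. -/
def hv1 (r : ℝ) (f : ℝ → ℝ → ℝ) (θ : ℝ) : EuclideanSpace ℝ (Fin 3) :=
  WithLp.toLp 2 ![-(r * Real.sin θ), r * Real.cos θ, 1 + deriv (f r) θ]

/-- Second derivative of the almost-helical curve. -/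
def hv2 (r : ℝ) (f : ℝ → ℝ → ℝ) (θ : ℝ) : EuclideanSpace ℝ (Fin 3) :=
  WithLp.toLp 2 ![-(r * Real.cos θ), -(r * Real.sin θ), deriv (deriv (f r)) θ]

lemma hfd1 (r : ℝ) (f : ℝ → ℝ → ℝ) (hf : ContDiff ℝ 2 (f r)) : ContDiff ℝ 1 (deriv (f r)) := by
  have h2 : ContDiff ℝ ((1:WithTop ℕ∞)+1) (f r) := by norm_num; exact hf
  exact (contDiff_succ_iff_deriv.mp h2).2.2

lemma hc1 (r : ℝ) (f : ℝ → ℝ → ℝ) (hf : ContDiff ℝ 2 (f r)) (θ : ℝ) :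
    HasDerivAt (helCurve r f) (hv1 r f θ) θ := by
  have h : HasDerivAt (fun θ : ℝ => (![r * Real.cos θ, r * Real.sin θ, θ + f r θ] : Fin 3 → ℝ))
      (![-(r * Real.sin θ), r * Real.cos θ, 1 + deriv (f r) θ]) θ := by
    rw [hasDerivAt_pi]
    intro i
    fin_cases i
    · simpa using (Real.hasDerivAt_cos θ).const_mul r
    · simpa using (Real.hasDerivAt_sin θ).const_mul r
    · simp; exact (hasDerivAt_id' θ).add ((hf.differentiable (by norm_num)) θ).hasDerivAt
  exact ((EuclideanSpace.equiv (Fin 3) ℝ).symm.toContinuousLinearMap.hasFDerivAt.comp_hasDerivAt θ h :)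

lemma hc2 (r : ℝ) (f : ℝ → ℝ → ℝ) (hf : ContDiff ℝ 2 (f r)) (θ : ℝ) :
    HasDerivAt (hv1 r f) (hv2 r f θ) θ := by
  have h : HasDerivAt
      (fun θ : ℝ => (![-(r * Real.sin θ), r * Real.cos θ, 1 + deriv (f r) θ] : Fin 3 → ℝ))
      (![-(r * Real.cos θ), -(r * Real.sin θ), deriv (deriv (f r)) θ]) θ := by
    rw [hasDerivAt_pi]
    intro i
    fin_cases i
    · simp; exact ((Real.hasDerivAt_sin θ).const_mul r).neg
    · simpa using (Real.hasDerivAt_cos θ).const_mul r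
    · simp; exact
        (((hfd1 r f hf).differentiable one_ne_zero) θ)
  exact ((EuclideanSpace.equiv (Fin 3) ℝ).symm.toContinuousLinearMap.hasFDerivAt.comp_hasDerivAt θ h :)

lemma derivHel (r : ℝ) (f : ℝ → ℝ → ℝ) (hf : ContDiff ℝ 2 (f r)) :
    deriv (helCurve r f) = hv1 r f :=
  funext fun θ => (hc1 r f hf θ).deriv

lemma derivHel2 (r : ℝ) (f : ℝ → ℝ → ℝ) (hf : ContDiff ℝ 2 (f r)) (θ : ℝ) :
    deriv (deriv (helCurve r f)) θ = hv2 r f θ := by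
  rw [derivHel r f hf]
  exact (hc2 r f hf θ).deriv

lemma normCross (r : ℝ) (f : ℝ → ℝ → ℝ) (θ : ℝ) :
    ‖cross3 (hv1 r f θ) (hv2 r f θ)‖
      = Real.sqrt (r^2*((deriv (deriv (f r)) θ)^2+(1+deriv (f r) θ)^2) + r^4) := by
  simp only [cross3, hv1, hv2, EuclideanSpace.norm_eq, PiLp.toLp_apply, WithLp.ofLp_toLp, Fin.sum_univ_three,
    Matrix.cons_val_zero, Matrix.cons_val_one, Matrix.head_cons, Matrix.cons_val_two,
    Matrix.tail_cons, Real.norm_eq_abs, sq_abs]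
  congr 1
  linear_combination (r^2*((deriv (deriv (f r)) θ)^2+(1+deriv (f r) θ)^2)
    + r^4*(Real.sin θ^2 + Real.cos θ^2 + 1)) * (sin_sq_add_cos_sq θ)

lemma normV1 (r : ℝ) (f : ℝ → ℝ → ℝ) (θ : ℝ) :
    ‖hv1 r f θ‖^2 = r^2 + (1+deriv (f r) θ)^2 := by
  simp only [hv1, EuclideanSpace.norm_eq, PiLp.toLp_apply, WithLp.ofLp_toLp, Fin.sum_univ_three,
    Matrix.cons_val_zero, Matrix.cons_val_one, Matrix.head_cons, Matrix.cons_val_two,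
    Matrix.tail_cons, Real.norm_eq_abs, sq_abs]
  rw [Real.sq_sqrt (by positivity)]
  linear_combination (r^2) * (sin_sq_add_cos_sq θ)

/-- Let `f(r,θ)` be defined for `r ≥ R₀` and `θ ∈ [0,A]`, twice differentiable in `θ`, such that
`∂f/∂θ` and `∂²f/∂θ²` tend to zero uniformly as `r → ∞`.  Then for every sufficiently large `r`,
the curve `θ ↦ (r cos θ, r sin θ, θ + f(r,θ))`, `θ ∈ [0,A]`, has total curvature strictly
less than `A`. -/
theorem stmt3 (A R₀ : ℝ) (hA : 0 < A) (f : ℝ → ℝ → ℝ)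
    (hf : ∀ r ≥ R₀, ContDiff ℝ 2 (f r))
    (hunif : ∀ ε > 0, ∃ R ≥ R₀, ∀ r ≥ R, ∀ θ ∈ Set.Icc (0 : ℝ) A,
      |deriv (f r) θ| < ε ∧ |deriv (deriv (f r)) θ| < ε) :
    ∃ R₁ ≥ R₀, ∀ r ≥ R₁,
      (∫ θ in (0:ℝ)..A,
          ‖cross3 (deriv (helCurve r f) θ) (deriv (deriv (helCurve r f)) θ)‖
            / ‖deriv (helCurve r f) θ‖ ^ 2) < A := by
  obtain ⟨R, hRR₀, hR⟩ := hunif (1/10) (by norm_num)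
  refine ⟨max R 1, le_trans hRR₀ (le_max_left _ _), fun r hr => ?_⟩
  have hr1 : (1:ℝ) ≤ r := le_trans (le_max_right _ _) hr
  have hrR : R ≤ r := le_trans (le_max_left _ _) hr
  have hfr : ContDiff ℝ 2 (f r) := hf r (hRR₀.trans hrR)
  set K : ℝ := Real.sqrt (r^4 + (122/100)*r^2) / (r^2 + 81/100) with hK
  have hKlt : K < 1 := by
    rw [hK, div_lt_one (by positivity)]
    rw [show r^2 + 81/100 = Real.sqrt ((r^2 + 81/100)^2) from
      (Real.sqrt_sq (by positivity)).symm]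
    apply Real.sqrt_lt_sqrt (by positivity)
    nlinarith
  have hK0 : 0 ≤ K := by positivity
  have hbound : ∀ θ ∈ Set.uIoc (0:ℝ) A,
      ‖‖cross3 (deriv (helCurve r f) θ) (deriv (deriv (helCurve r f)) θ)‖
          / ‖deriv (helCurve r f) θ‖ ^ 2‖ ≤ K := by
    intro θ hθ
    rw [Set.uIoc_of_le hA.le] at hθ
    obtain ⟨hp, hq⟩ := hR r hrR θ ⟨hθ.1.le, hθ.2⟩
    rw [Real.norm_eq_abs, abs_of_nonneg (by positivity)]
    rw [derivHel2 r f hfr θ, derivHel r f hfr, normCross, normV1]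
    set p := deriv (f r) θ
    set q := deriv (deriv (f r)) θ
    have hp' := abs_le.mp hp.le
    have hq' := abs_le.mp hq.le
    rw [hK]
    have hq2 : q^2 ≤ 1/100 := by nlinarith [hq'.1, hq'.2]
    have hp2 : (1+p)^2 ≤ 121/100 := by nlinarith [hp'.1, hp'.2]
    have hp3 : 81/100 ≤ (1+p)^2 := by nlinarith [hp'.1, hp'.2]
    apply div_le_div₀ (Real.sqrt_nonneg _)
    · apply Real.sqrt_le_sqrt
      nlinarith [sq_nonneg r, hq2, hp2]
    · positivity
    · linarith
  have hint := intervalIntegral.norm_integral_le_of_norm_le_const hbound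
  calc (∫ θ in (0:ℝ)..A,
          ‖cross3 (deriv (helCurve r f) θ) (deriv (deriv (helCurve r f)) θ)‖
            / ‖deriv (helCurve r f) θ‖ ^ 2)
      ≤ ‖∫ θ in (0:ℝ)..A,
          ‖cross3 (deriv (helCurve r f) θ) (deriv (deriv (helCurve r f)) θ)‖
            / ‖deriv (helCurve r f) θ‖ ^ 2‖ := le_abs_self _
    _ ≤ K * |A - 0| := hint
    _ = K * A := by rw [sub_zero, abs_of_pos hA]
    _ < 1 * A := mul_lt_mul_of_pos_right hKlt hA
    _ = A := one_mul A
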